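/- Let S and A be nonempty finite sets, let γ ∈ [0,1), let π : S → PMF(A) be a policy, and let ρ⁰ ∈ PMF(S). Let M₁ and M₂ be two nonempty sets of models, where a model m is a pair (P, r) of a transition kernel P : S → A → PMF(S) and a reward function r : S × A → [0,1], and let J(π, m) denote the expected discounted return of π under model m starting from ρ⁰. Suppose L_P, L_r ≥ 0 are such that: for every m₁ = (P₁, r₁) ∈ M₁ there exists m₂ = (P₂, r₂) ∈ M₂ with Σ_{s'} |P₁(s,a)(s') − P₂(s,a)(s')| ≤ L_P and |r₁(s,a) − r₂(s,a)| ≤ L_r for all (s,a), and symmetrically for every m₂ ∈ M₂ there exists such an m₁ ∈ M₁. Then |inf_{m ∈ M₁} J(π, m) − inf_{m ∈ M₂} J(π, m)| ≤ L_r/(1−γ) + γ·L_P/(1−γ)². -/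

import Mathlib

noncomputable section

/-- Policy-mixed one-step state-to-state kernel: `K^π(s'|s) = ∑_a π(s)(a) · K(s,a)(s')`. -/
def kerPi {S A : Type*} [Fintype A] (π : S → PMF A) (K : S → A → PMF S)
    (s s' : S) : ℝ :=
  ∑ a : A, ((π s) a).toReal * ((K s a) s').toReal

/-- State distribution at time step `k` under policy `π`, kernel `K` and initial
distribution `ρ`: `μ₀ = ρ`, `μ_{k+1}(s') = ∑_s μ_k(s) · ∑_a π(s)(a) · K(s,a)(s')`. -/
def stateDist {S A : Type*} [Fintype S] [Fintype A] (π : S → PMF A)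
    (K : S → A → PMF S) (ρ : PMF S) : ℕ → S → ℝ
  | 0 => fun s => (ρ s).toReal
  | (k + 1) => fun s' => ∑ s : S, stateDist π K ρ k s * kerPi π K s s'

/-- Discounted state occupancy measure `d^π(s) = (1-γ) ∑_{k≥0} γ^k μ_k(s)`. -/
def occ {S A : Type*} [Fintype S] [Fintype A] (γ : ℝ) (π : S → PMF A)
    (K : S → A → PMF S) (ρ : PMF S) (s : S) : ℝ :=
  (1 - γ) * ∑' k : ℕ, γ ^ k * stateDist π K ρ k s

/-- Expected discounted return
`J(π, K, r) = ∑_{k≥0} γ^k ∑_s μ_k(s) ∑_a π(s)(a) r(s,a)`. -/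
def ret {S A : Type*} [Fintype S] [Fintype A] (γ : ℝ) (π : S → PMF A)
    (K : S → A → PMF S) (ρ : PMF S) (r : S × A → ℝ) : ℝ :=
  ∑' k : ℕ, γ ^ k * ∑ s : S, stateDist π K ρ k s * ∑ a : A, ((π s) a).toReal * r (s, a)

/-- A model of a finite MDP: a transition kernel together with a reward function. -/
abbrev Model (S A : Type*) [Fintype S] : Type _ := (S → A → PMF S) × (S × A → ℝ)

set_option linter.unusedSectionVars false
set_option linter.unusedVariables false
section Aux

variable {S A : Type*} [Fintype S] [Fintype A]

lemma pmf_sum_toReal {α : Type*} [Fintype α] (p : PMF α) :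
    ∑ a : α, (p a).toReal = 1 := by
  rw [show (1:ℝ) = (1:ENNReal).toReal by simp, ← p.tsum_coe, tsum_fintype]
  exact (ENNReal.toReal_sum fun a _ => p.apply_ne_top a).symm

lemma kerPi_nonneg (π : S → PMF A) (K : S → A → PMF S) (s s' : S) :
    0 ≤ kerPi π K s s' :=
  Finset.sum_nonneg fun a _ => mul_nonneg ENNReal.toReal_nonneg ENNReal.toReal_nonneg

lemma sum_kerPi (π : S → PMF A) (K : S → A → PMF S) (s : S) :
    ∑ s' : S, kerPi π K s s' = 1 := by
  unfold kerPi
  rw [Finset.sum_comm]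
  simp_rw [← Finset.mul_sum, pmf_sum_toReal, mul_one, pmf_sum_toReal]

lemma stateDist_nonneg (π : S → PMF A) (K : S → A → PMF S) (ρ : PMF S)
    (k : ℕ) (s : S) : 0 ≤ stateDist π K ρ k s := by
  induction k generalizing s with
  | zero => exact ENNReal.toReal_nonneg
  | succ k ih =>
    exact Finset.sum_nonneg fun t _ => mul_nonneg (ih t) (kerPi_nonneg _ _ _ _)

lemma sum_stateDist (π : S → PMF A) (K : S → A → PMF S) (ρ : PMF S) (k : ℕ) :
    ∑ s : S, stateDist π K ρ k s = 1 := by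
  induction k with
  | zero => exact pmf_sum_toReal ρ
  | succ k ih =>
    show ∑ s' : S, ∑ s : S, stateDist π K ρ k s * kerPi π K s s' = 1
    rw [Finset.sum_comm]
    simp_rw [← Finset.mul_sum, sum_kerPi, mul_one, ih]

lemma kerPi_l1 {L_P : ℝ} (π : S → PMF A) (K₁ K₂ : S → A → PMF S)
    (hK : ∀ s a, ∑ s' : S, |((K₁ s a) s').toReal - ((K₂ s a) s').toReal| ≤ L_P) (s : S) :
    ∑ s' : S, |kerPi π K₁ s s' - kerPi π K₂ s s'| ≤ L_P := by
  have h1 : ∀ s' : S, |kerPi π K₁ s s' - kerPi π K₂ s s'| ≤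
      ∑ a : A, ((π s) a).toReal * |((K₁ s a) s').toReal - ((K₂ s a) s').toReal| := by
    intro s'
    rw [kerPi, kerPi, ← Finset.sum_sub_distrib]
    refine (Finset.abs_sum_le_sum_abs _ _).trans (Finset.sum_le_sum fun a _ => ?_)
    rw [← mul_sub, abs_mul, abs_of_nonneg ENNReal.toReal_nonneg]
  calc ∑ s' : S, |kerPi π K₁ s s' - kerPi π K₂ s s'|
      ≤ ∑ s' : S, ∑ a : A, ((π s) a).toReal * |((K₁ s a) s').toReal - ((K₂ s a) s').toReal| :=
        Finset.sum_le_sum fun s' _ => h1 s'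
    _ = ∑ a : A, ((π s) a).toReal * ∑ s' : S, |((K₁ s a) s').toReal - ((K₂ s a) s').toReal| := by
        rw [Finset.sum_comm]; simp_rw [Finset.mul_sum]
    _ ≤ ∑ a : A, ((π s) a).toReal * L_P := by
        refine Finset.sum_le_sum fun a _ => mul_le_mul_of_nonneg_left (hK s a)
          ENNReal.toReal_nonneg
    _ = L_P := by rw [← Finset.sum_mul, pmf_sum_toReal, one_mul]

lemma stateDist_l1 {L_P : ℝ} (hLP : 0 ≤ L_P) (π : S → PMF A) (K₁ K₂ : S → A → PMF S)
    (ρ : PMF S)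
    (hK : ∀ s a, ∑ s' : S, |((K₁ s a) s').toReal - ((K₂ s a) s').toReal| ≤ L_P) (k : ℕ) :
    ∑ s : S, |stateDist π K₁ ρ k s - stateDist π K₂ ρ k s| ≤ k * L_P := by
  induction k with
  | zero => simp [stateDist]
  | succ k ih =>
    have key : ∀ s' : S, |stateDist π K₁ ρ (k+1) s' - stateDist π K₂ ρ (k+1) s'| ≤
        (∑ s : S, stateDist π K₁ ρ k s * |kerPi π K₁ s s' - kerPi π K₂ s s'|) +
        ∑ s : S, |stateDist π K₁ ρ k s - stateDist π K₂ ρ k s| * kerPi π K₂ s s' := by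
      intro s'
      have : stateDist π K₁ ρ (k+1) s' - stateDist π K₂ ρ (k+1) s' =
          (∑ s : S, stateDist π K₁ ρ k s * (kerPi π K₁ s s' - kerPi π K₂ s s')) +
          ∑ s : S, (stateDist π K₁ ρ k s - stateDist π K₂ ρ k s) * kerPi π K₂ s s' := by
        show (∑ s : S, stateDist π K₁ ρ k s * kerPi π K₁ s s') -
            (∑ s : S, stateDist π K₂ ρ k s * kerPi π K₂ s s') = _
        rw [← Finset.sum_add_distrib, ← Finset.sum_sub_distrib]
        congr 1; ext s; ring
      rw [this]
      refine (abs_add_le _ _).trans (add_le_add ?_ ?_) <;>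
        refine (Finset.abs_sum_le_sum_abs _ _).trans
          (le_of_eq (Finset.sum_congr rfl fun s _ => ?_))
      · rw [abs_mul, abs_of_nonneg (stateDist_nonneg π K₁ ρ k s)]
      · rw [abs_mul, abs_of_nonneg (kerPi_nonneg π K₂ s s')]
    calc ∑ s' : S, |stateDist π K₁ ρ (k+1) s' - stateDist π K₂ ρ (k+1) s'|
        ≤ ∑ s' : S, ((∑ s : S, stateDist π K₁ ρ k s * |kerPi π K₁ s s' - kerPi π K₂ s s'|) +
            ∑ s : S, |stateDist π K₁ ρ k s - stateDist π K₂ ρ k s| * kerPi π K₂ s s') :=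
          Finset.sum_le_sum fun s' _ => key s'
      _ = (∑ s : S, stateDist π K₁ ρ k s *
            ∑ s' : S, |kerPi π K₁ s s' - kerPi π K₂ s s'|) +
          ∑ s : S, |stateDist π K₁ ρ k s - stateDist π K₂ ρ k s| *
            ∑ s' : S, kerPi π K₂ s s' := by
          rw [Finset.sum_add_distrib, Finset.sum_comm (γ := S)]
          nth_rw 2 [Finset.sum_comm]
          simp_rw [Finset.mul_sum]
      _ ≤ (∑ s : S, stateDist π K₁ ρ k s * L_P) +
          ∑ s : S, |stateDist π K₁ ρ k s - stateDist π K₂ ρ k s| := by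
          refine add_le_add (Finset.sum_le_sum fun s _ =>
            mul_le_mul_of_nonneg_left (kerPi_l1 π K₁ K₂ hK s)
              (stateDist_nonneg π K₁ ρ k s)) (le_of_eq ?_)
          simp_rw [sum_kerPi, mul_one]
      _ ≤ L_P + k * L_P := by
          rw [← Finset.sum_mul, sum_stateDist, one_mul]
          exact add_le_add le_rfl ih
      _ = (k+1 : ℕ) * L_P := by push_cast; ring

lemma retR_mem_Icc (π : S → PMF A) (r : S × A → ℝ) (hr : ∀ x, r x ∈ Set.Icc (0:ℝ) 1) (s : S) :
    (∑ a : A, ((π s) a).toReal * r (s, a)) ∈ Set.Icc (0:ℝ) 1 := by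
  constructor
  · exact Finset.sum_nonneg fun a _ => mul_nonneg ENNReal.toReal_nonneg (hr (s, a)).1
  · calc ∑ a : A, ((π s) a).toReal * r (s, a) ≤ ∑ a : A, ((π s) a).toReal :=
        Finset.sum_le_sum fun a _ => by
          nth_rw 2 [← mul_one (((π s) a).toReal)]
          exact mul_le_mul_of_nonneg_left (hr (s, a)).2 ENNReal.toReal_nonneg
      _ = 1 := pmf_sum_toReal _

lemma cstep_mem_Icc (π : S → PMF A) (K : S → A → PMF S) (ρ : PMF S) (r : S × A → ℝ)
    (hr : ∀ x, r x ∈ Set.Icc (0:ℝ) 1) (k : ℕ) :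
    (∑ s : S, stateDist π K ρ k s * ∑ a : A, ((π s) a).toReal * r (s, a)) ∈ Set.Icc (0:ℝ) 1 := by
  constructor
  · exact Finset.sum_nonneg fun s _ => mul_nonneg (stateDist_nonneg π K ρ k s)
      (retR_mem_Icc π r hr s).1
  · calc ∑ s : S, stateDist π K ρ k s * ∑ a : A, ((π s) a).toReal * r (s, a)
        ≤ ∑ s : S, stateDist π K ρ k s := Finset.sum_le_sum fun s _ => by
          nth_rw 2 [← mul_one (stateDist π K ρ k s)]
          exact mul_le_mul_of_nonneg_left (retR_mem_Icc π r hr s).2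
            (stateDist_nonneg π K ρ k s)
      _ = 1 := sum_stateDist π K ρ k

lemma summable_retTerm {γ : ℝ} (hγ0 : 0 ≤ γ) (hγ1 : γ < 1) (π : S → PMF A)
    (K : S → A → PMF S) (ρ : PMF S) (r : S × A → ℝ) (hr : ∀ x, r x ∈ Set.Icc (0:ℝ) 1) :
    Summable (fun k : ℕ => γ ^ k * ∑ s : S, stateDist π K ρ k s *
      ∑ a : A, ((π s) a).toReal * r (s, a)) := by
  refine Summable.of_nonneg_of_le (fun k => mul_nonneg (pow_nonneg hγ0 k)
    (cstep_mem_Icc π K ρ r hr k).1) (fun k => ?_)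
    (summable_geometric_of_lt_one hγ0 hγ1)
  nth_rw 2 [← mul_one (γ ^ k)]
  exact mul_le_mul_of_nonneg_left (cstep_mem_Icc π K ρ r hr k).2 (pow_nonneg hγ0 k)

lemma ret_nonneg {γ : ℝ} (hγ0 : 0 ≤ γ) (π : S → PMF A) (K : S → A → PMF S) (ρ : PMF S)
    (r : S × A → ℝ) (hr : ∀ x, r x ∈ Set.Icc (0:ℝ) 1) : 0 ≤ ret γ π K ρ r :=
  tsum_nonneg fun k => mul_nonneg (pow_nonneg hγ0 k) (cstep_mem_Icc π K ρ r hr k).1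

lemma ret_abs_sub_le {γ L_P L_r : ℝ} (hγ0 : 0 ≤ γ) (hγ1 : γ < 1) (hLP : 0 ≤ L_P)
    (hLr : 0 ≤ L_r) (π : S → PMF A) (ρ : PMF S) (K₁ K₂ : S → A → PMF S)
    (r₁ r₂ : S × A → ℝ)
    (hr₁ : ∀ x, r₁ x ∈ Set.Icc (0:ℝ) 1) (hr₂ : ∀ x, r₂ x ∈ Set.Icc (0:ℝ) 1)
    (hK : ∀ s a, ∑ s' : S, |((K₁ s a) s').toReal - ((K₂ s a) s').toReal| ≤ L_P)
    (hr : ∀ s a, |r₁ (s, a) - r₂ (s, a)| ≤ L_r) :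
    |ret γ π K₁ ρ r₁ - ret γ π K₂ ρ r₂| ≤ L_r / (1 - γ) + γ * L_P / (1 - γ) ^ 2 := by
  set R₁ : S → ℝ := fun s => ∑ a : A, ((π s) a).toReal * r₁ (s, a) with hR₁
  set R₂ : S → ℝ := fun s => ∑ a : A, ((π s) a).toReal * r₂ (s, a) with hR₂
  set c₁ : ℕ → ℝ := fun k => ∑ s : S, stateDist π K₁ ρ k s * R₁ s with hc₁
  set c₂ : ℕ → ℝ := fun k => ∑ s : S, stateDist π K₂ ρ k s * R₂ s with hc₂
  have hγn : ‖γ‖ < 1 := by rw [Real.norm_eq_abs, abs_of_nonneg hγ0]; exact hγ1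
  have hRdiff : ∀ s : S, |R₁ s - R₂ s| ≤ L_r := by
    intro s
    rw [hR₁, hR₂]
    simp only
    rw [← Finset.sum_sub_distrib]
    refine (Finset.abs_sum_le_sum_abs _ _).trans ?_
    calc ∑ a : A, |((π s) a).toReal * r₁ (s, a) - ((π s) a).toReal * r₂ (s, a)|
        = ∑ a : A, ((π s) a).toReal * |r₁ (s, a) - r₂ (s, a)| := by
          refine Finset.sum_congr rfl fun a _ => ?_
          rw [← mul_sub, abs_mul, abs_of_nonneg ENNReal.toReal_nonneg]
      _ ≤ ∑ a : A, ((π s) a).toReal * L_r := Finset.sum_le_sum fun a _ =>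
          mul_le_mul_of_nonneg_left (hr s a) ENNReal.toReal_nonneg
      _ = L_r := by rw [← Finset.sum_mul, pmf_sum_toReal, one_mul]
  have hcdiff : ∀ k : ℕ, |c₁ k - c₂ k| ≤ L_r + k * L_P := by
    intro k
    have hsplit : c₁ k - c₂ k =
        (∑ s : S, stateDist π K₁ ρ k s * (R₁ s - R₂ s)) +
        ∑ s : S, (stateDist π K₁ ρ k s - stateDist π K₂ ρ k s) * R₂ s := by
      rw [hc₁, hc₂]
      simp only
      rw [← Finset.sum_add_distrib, ← Finset.sum_sub_distrib]
      congr 1; ext s; ring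
    rw [hsplit]
    refine (abs_add_le _ _).trans (add_le_add ?_ ?_)
    · refine (Finset.abs_sum_le_sum_abs _ _).trans ?_
      calc ∑ s : S, |stateDist π K₁ ρ k s * (R₁ s - R₂ s)|
          = ∑ s : S, stateDist π K₁ ρ k s * |R₁ s - R₂ s| := by
            refine Finset.sum_congr rfl fun s _ => ?_
            rw [abs_mul, abs_of_nonneg (stateDist_nonneg π K₁ ρ k s)]
        _ ≤ ∑ s : S, stateDist π K₁ ρ k s * L_r := Finset.sum_le_sum fun s _ =>
            mul_le_mul_of_nonneg_left (hRdiff s) (stateDist_nonneg π K₁ ρ k s)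
        _ = L_r := by rw [← Finset.sum_mul, sum_stateDist, one_mul]
    · refine (Finset.abs_sum_le_sum_abs _ _).trans ?_
      calc ∑ s : S, |(stateDist π K₁ ρ k s - stateDist π K₂ ρ k s) * R₂ s|
          ≤ ∑ s : S, |stateDist π K₁ ρ k s - stateDist π K₂ ρ k s| := by
            refine Finset.sum_le_sum fun s _ => ?_
            rw [abs_mul]
            nth_rw 2 [← mul_one (|stateDist π K₁ ρ k s - stateDist π K₂ ρ k s|)]
            refine mul_le_mul_of_nonneg_left ?_ (abs_nonneg _)
            rw [abs_le]
            exact ⟨by linarith [(retR_mem_Icc π r₂ hr₂ s).1],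
              (retR_mem_Icc π r₂ hr₂ s).2⟩
        _ ≤ k * L_P := stateDist_l1 hLP π K₁ K₂ ρ hK k
  have hs₁ := summable_retTerm hγ0 hγ1 π K₁ ρ r₁ hr₁
  have hs₂ := summable_retTerm hγ0 hγ1 π K₂ ρ r₂ hr₂
  have hsg : Summable (fun k : ℕ => γ ^ k * (L_r + k * L_P)) := by
    have : (fun k : ℕ => γ ^ k * (L_r + k * L_P)) =
        fun k : ℕ => L_r * γ ^ k + L_P * ((k : ℝ) * γ ^ k) := by ext k; ring
    rw [this]
    exact ((summable_geometric_of_lt_one hγ0 hγ1).mul_left L_r).add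
      (((hasSum_coe_mul_geometric_of_norm_lt_one hγn).summable).mul_left L_P)
  have hdiff_eq : ret γ π K₁ ρ r₁ - ret γ π K₂ ρ r₂ =
      ∑' k : ℕ, (γ ^ k * c₁ k - γ ^ k * c₂ k) := (Summable.tsum_sub hs₁ hs₂).symm
  have hterm : ∀ k : ℕ, |γ ^ k * c₁ k - γ ^ k * c₂ k| ≤ γ ^ k * (L_r + k * L_P) := by
    intro k
    rw [← mul_sub, abs_mul, abs_of_nonneg (pow_nonneg hγ0 k)]
    exact mul_le_mul_of_nonneg_left (hcdiff k) (pow_nonneg hγ0 k)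
  have habs : Summable (fun k : ℕ => |γ ^ k * c₁ k - γ ^ k * c₂ k|) :=
    Summable.of_nonneg_of_le (fun k => abs_nonneg _) hterm hsg
  calc |ret γ π K₁ ρ r₁ - ret γ π K₂ ρ r₂|
      = |∑' k : ℕ, (γ ^ k * c₁ k - γ ^ k * c₂ k)| := by rw [hdiff_eq]
    _ ≤ ∑' k : ℕ, |γ ^ k * c₁ k - γ ^ k * c₂ k| := by
        simpa [Real.norm_eq_abs] using norm_tsum_le_tsum_norm
          (by simpa [Real.norm_eq_abs] using habs :
            Summable fun k : ℕ => ‖γ ^ k * c₁ k - γ ^ k * c₂ k‖)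
    _ ≤ ∑' k : ℕ, γ ^ k * (L_r + k * L_P) := Summable.tsum_le_tsum hterm habs hsg
    _ = L_r * (1 - γ)⁻¹ + L_P * (γ / (1 - γ) ^ 2) := by
        have : (fun k : ℕ => γ ^ k * (L_r + k * L_P)) =
            fun k : ℕ => L_r * γ ^ k + L_P * ((k : ℝ) * γ ^ k) := by ext k; ring
        rw [this, Summable.tsum_add ((summable_geometric_of_lt_one hγ0 hγ1).mul_left L_r)
          (((hasSum_coe_mul_geometric_of_norm_lt_one hγn).summable).mul_left L_P),
          tsum_mul_left, tsum_mul_left, tsum_geometric_of_lt_one hγ0 hγ1,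
          tsum_coe_mul_geometric_of_norm_lt_one hγn]
    _ = L_r / (1 - γ) + γ * L_P / (1 - γ) ^ 2 := by ring

end Aux

/-- If two nonempty uncertainty sets of models (with `[0,1]`-valued
rewards) are mutually within `(L_P, L_r)` (kernel ℓ₁ / reward sup distance), then their
robust objectives `inf_{m ∈ M} J(π, m)` differ by at most `L_r/(1-γ) + γ L_P/(1-γ)²`. -/
theorem robust_obj_abs_sub_le {S A : Type*} [Fintype S] [Fintype A] [Nonempty S] [Nonempty A]
    (γ : ℝ) (hγ0 : 0 ≤ γ) (hγ1 : γ < 1)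
    (π : S → PMF A) (ρ : PMF S)
    (M₁ M₂ : Set (Model S A)) (hM₁ : M₁.Nonempty) (hM₂ : M₂.Nonempty)
    (hrew : ∀ m ∈ M₁ ∪ M₂, ∀ x, m.2 x ∈ Set.Icc (0 : ℝ) 1)
    (L_P L_r : ℝ) (hLP : 0 ≤ L_P) (hLr : 0 ≤ L_r)
    (h12 : ∀ m₁ ∈ M₁, ∃ m₂ ∈ M₂,
      (∀ s : S, ∀ a : A, ∑ s' : S, |((m₁.1 s a) s').toReal - ((m₂.1 s a) s').toReal| ≤ L_P) ∧
      ∀ s : S, ∀ a : A, |m₁.2 (s, a) - m₂.2 (s, a)| ≤ L_r)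
    (h21 : ∀ m₂ ∈ M₂, ∃ m₁ ∈ M₁,
      (∀ s : S, ∀ a : A, ∑ s' : S, |((m₁.1 s a) s').toReal - ((m₂.1 s a) s').toReal| ≤ L_P) ∧
      ∀ s : S, ∀ a : A, |m₁.2 (s, a) - m₂.2 (s, a)| ≤ L_r) :
    |sInf ((fun m : Model S A => ret γ π m.1 ρ m.2) '' M₁) -
        sInf ((fun m : Model S A => ret γ π m.1 ρ m.2) '' M₂)| ≤
      L_r / (1 - γ) + γ * L_P / (1 - γ) ^ 2 := by
  set F : Model S A → ℝ := fun m => ret γ π m.1 ρ m.2 with hF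
  set B : ℝ := L_r / (1 - γ) + γ * L_P / (1 - γ) ^ 2 with hB
  have hne₁ : (F '' M₁).Nonempty := hM₁.image F
  have hne₂ : (F '' M₂).Nonempty := hM₂.image F
  have hbdd₁ : BddBelow (F '' M₁) := by
    refine ⟨0, fun x hx => ?_⟩
    obtain ⟨m, hm, rfl⟩ := hx
    exact ret_nonneg hγ0 π m.1 ρ m.2 (hrew m (Set.mem_union_left _ hm))
  have hbdd₂ : BddBelow (F '' M₂) := by
    refine ⟨0, fun x hx => ?_⟩
    obtain ⟨m, hm, rfl⟩ := hx
    exact ret_nonneg hγ0 π m.1 ρ m.2 (hrew m (Set.mem_union_right _ hm))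
  rw [abs_sub_le_iff]
  constructor
  · rw [sub_le_iff_le_add, add_comm, ← sub_le_iff_le_add]
    refine le_csInf hne₂ fun x hx => ?_
    obtain ⟨m₂, hm₂, rfl⟩ := hx
    obtain ⟨m₁, hm₁, hKc, hrc⟩ := h21 m₂ hm₂
    have hd : |F m₁ - F m₂| ≤ B :=
      ret_abs_sub_le hγ0 hγ1 hLP hLr π ρ m₁.1 m₂.1 m₁.2 m₂.2
        (hrew m₁ (Set.mem_union_left _ hm₁)) (hrew m₂ (Set.mem_union_right _ hm₂))
        hKc (fun s a => hrc s a)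
    have h1 : sInf (F '' M₁) ≤ F m₁ := csInf_le hbdd₁ ⟨m₁, hm₁, rfl⟩
    rw [abs_le] at hd
    linarith [hd.2]
  · rw [sub_le_iff_le_add, add_comm, ← sub_le_iff_le_add]
    refine le_csInf hne₁ fun x hx => ?_
    obtain ⟨m₁, hm₁, rfl⟩ := hx
    obtain ⟨m₂, hm₂, hKc, hrc⟩ := h12 m₁ hm₁
    have hd : |F m₁ - F m₂| ≤ B :=
      ret_abs_sub_le hγ0 hγ1 hLP hLr π ρ m₁.1 m₂.1 m₁.2 m₂.2
        (hrew m₁ (Set.mem_union_left _ hm₁)) (hrew m₂ (Set.mem_union_right _ hm₂))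
        hKc (fun s a => hrc s a)
    have h2 : sInf (F '' M₂) ≤ F m₂ := csInf_le hbdd₂ ⟨m₂, hm₂, rfl⟩
    rw [abs_le] at hd
    linarith [hd.1]
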